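/- arXiv:2009.03026 — 2 statements merged into one kernel-verified Lean document; each statement's English description precedes it below -/
import Mathlib

section
/- Let n ≥ 2, β > -2/n, and let λ be distributed as the Gaussian beta ensemble on ℝⁿ. Then the random variable p₁(λ) = Σ_j λ_j and the random vector λ - (1/n)p₁(λ)·(1,…,1) are independent. -/
open MeasureTheory ProbabilityTheory Real

/-- The density factor `|·|^β ∘ f` is measurable. -/
lemma gbe_aux_measurable_abs_rpow {α : Type*} [MeasurableSpace α] {f : α → ℝ}
    (hf : Measurable f) (β : ℝ) : Measurable fun a => |f a| ^ β := by
  have h : (fun a => |f a| ^ β)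
      = fun a => if |f a| = 0 then (0:ℝ) ^ β else Real.exp (Real.log |f a| * β) := by
    funext a
    by_cases h : |f a| = 0
    · rw [if_pos h, h]
    · rw [if_neg h, Real.rpow_def_of_pos ((abs_nonneg _).lt_of_ne (Ne.symm h))]
  rw [h]
  exact Measurable.ite (hf.abs (measurableSet_singleton 0)) measurable_const
    ((hf.abs.log.mul_const β).exp)

/-- Hyperplanes `{l i = l j}` are Lebesgue-null. -/
lemma gbe_aux_hyperplane_null (N : ℕ) (i j : Fin N) (hij : i ≠ j) :
    (volume : Measure (Fin N → ℝ)) {l | l j - l i = 0} = 0 := by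
  have hset : {l : Fin N → ℝ | l j - l i = 0}
      = (LinearMap.ker ((LinearMap.proj j : (Fin N → ℝ) →ₗ[ℝ] ℝ) - LinearMap.proj i)
          : Set (Fin N → ℝ)) := by
    ext l
    simp [LinearMap.mem_ker, LinearMap.sub_apply]
  rw [hset]
  refine Measure.addHaar_submodule _ _ ?_
  intro htop
  have h1 : (Pi.single j 1 : Fin N → ℝ) ∈
      LinearMap.ker ((LinearMap.proj j : (Fin N → ℝ) →ₗ[ℝ] ℝ) - LinearMap.proj i) :=
    htop ▸ Submodule.mem_top
  simp [LinearMap.mem_ker, LinearMap.sub_apply, Pi.single_eq_same,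
    Pi.single_eq_of_ne hij] at h1

/-- The Vandermonde factor of the GβE density. -/
noncomputable def gbeVand (N : ℕ) (β : ℝ) (l : Fin N → ℝ) : ℝ :=
  |∏ p ∈ Finset.univ.filter (fun p : Fin N × Fin N => p.1 < p.2), (l p.2 - l p.1)| ^ β

/-- The (unnormalized) GβE density. -/
noncomputable def gbeDens (N : ℕ) (β : ℝ) (l : Fin N → ℝ) : ℝ :=
  gbeVand N β l * Real.exp (-(∑ j, l j ^ 2) / 2)

/-- First marginal factor. -/
noncomputable def gbeJ1 (s : ℝ) (A : Set ℝ) : ENNReal :=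
  ∫⁻ t : ℝ, A.indicator (fun _ => (1:ENNReal)) (s * t) * ENNReal.ofReal (Real.exp (-(t^2)/2))

/-- Second marginal factor. -/
noncomputable def gbeJ2 (m : ℕ) (β : ℝ) (C : (Fin m → ℝ) → (Fin (m+1) → ℝ)) (B : Set (Fin (m+1) → ℝ)) :
    ENNReal :=
  ∫⁻ y : Fin m → ℝ, B.indicator (fun _ => (1:ENNReal)) (C y) *
    ENNReal.ofReal (gbeVand (m+1) β (C y) * Real.exp (-(∑ i, y i ^ 2)/2))

/-- Under the GβE, `p₁(λ)` and the centered vector `λ - p₁(λ)/n` are independent. -/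
theorem gbe_center_indep (n : ℕ) (hn : 2 ≤ n) (β : ℝ) (hβ : -2 / n < β)
    (Z : ℝ) (μ : Measure (Fin n → ℝ))
    (hZ : Z = ∫ l : Fin n → ℝ,
      |∏ p ∈ Finset.univ.filter (fun p : Fin n × Fin n => p.1 < p.2), (l p.2 - l p.1)| ^ β
        * Real.exp (-(∑ j, l j ^ 2) / 2))
    (hμ : μ = (volume : Measure (Fin n → ℝ)).withDensity fun l =>
      ENNReal.ofReal (Z⁻¹ *
        (|∏ p ∈ Finset.univ.filter (fun p : Fin n × Fin n => p.1 < p.2), (l p.2 - l p.1)| ^ β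
          * Real.exp (-(∑ j, l j ^ 2) / 2)))) :
    IndepFun (fun l => ∑ j, l j) (fun l => fun j => l j - (∑ j', l j') / (n : ℝ)) μ := by
  classical
  rw [ProbabilityTheory.indepFun_iff_measure_inter_preimage_eq_mul]
  by_cases hint : Integrable (gbeDens n β) volume
  swap
  · -- degenerate case : `Z = 0` and `μ = 0`
    intro A B hA hB
    have hZ0 : Z = 0 := by
      rw [hZ]; exact integral_undef hint
    have hμ0 : μ = 0 := by
      rw [hμ, hZ0]
      simp
    simp [hμ0]
  -- main case
  obtain ⟨m, rfl⟩ : ∃ m, n = m + 1 := ⟨n - 1, by omega⟩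
  set fS : (Fin (m+1) → ℝ) → ℝ := fun l => ∑ j, l j with hfS_def
  set gC : (Fin (m+1) → ℝ) → (Fin (m+1) → ℝ) :=
    fun l => fun j => l j - (∑ j', l j') / ((m+1 : ℕ) : ℝ) with hgC_def
  have hfSm : Measurable fS := Finset.measurable_sum Finset.univ fun j _ => measurable_pi_apply j
  have hgCm : Measurable gC := measurable_pi_iff.mpr fun j =>
    (measurable_pi_apply j).sub (hfSm.div_const _)
  have hPm : Measurable (fun l : Fin (m+1) → ℝ =>
      ∏ p ∈ Finset.univ.filter (fun p : Fin (m+1) × Fin (m+1) => p.1 < p.2), (l p.2 - l p.1)) :=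
    Finset.measurable_prod _ fun p _ => (measurable_pi_apply p.2).sub (measurable_pi_apply p.1)
  have hVm : Measurable (gbeVand (m+1) β) := gbe_aux_measurable_abs_rpow hPm β
  have hgd : Measurable (gbeDens (m+1) β) := hVm.mul
    (((Finset.measurable_sum Finset.univ fun j _ => (measurable_pi_apply j).pow_const 2).neg.div_const 2).exp)
  have hnn : ∀ l, 0 ≤ gbeDens (m+1) β l := fun l =>
    mul_nonneg (Real.rpow_nonneg (abs_nonneg _) _) (Real.exp_nonneg _)
  have hZ' : Z = ∫ l, gbeDens (m+1) β l := hZ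
  have hμ' : μ = (volume : Measure (Fin (m+1) → ℝ)).withDensity
      fun l => ENNReal.ofReal (Z⁻¹ * gbeDens (m+1) β l) := hμ
  -- Vandermonde shift invariance
  have hVshift : ∀ (l : Fin (m+1) → ℝ) (c : ℝ), gbeVand (m+1) β (fun j => l j - c) = gbeVand (m+1) β l := by
    intro l c
    unfold gbeVand
    congr 2
    exact Finset.prod_congr rfl fun p _ => by ring
  -- geometry
  have hNpos : (0:ℝ) < ((m+1:ℕ):ℝ) := by positivity
  set s : ℝ := Real.sqrt ((m+1:ℕ):ℝ) with hs_def
  have hs : 0 < s := Real.sqrt_pos.mpr hNpos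
  have hs2 : s * s = ((m+1:ℕ):ℝ) := Real.mul_self_sqrt hNpos.le
  set u : EuclideanSpace ℝ (Fin (m+1)) := (WithLp.equiv 2 _).symm (fun _ => s⁻¹) with hu
  set e₀ : EuclideanSpace ℝ (Fin (m+1)) := EuclideanSpace.single (0 : Fin (m+1)) (1:ℝ) with he₀
  have hu_norm : ‖u‖ = 1 := by
    rw [EuclideanSpace.norm_eq]
    have h1 : ∑ j : Fin (m+1), ‖u j‖ ^ 2 = 1 := by
      have h0 : ∀ j : Fin (m+1), ‖u j‖ ^ 2 = (s*s)⁻¹ := by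
        intro j; show ‖s⁻¹‖^2 = _
        rw [Real.norm_eq_abs, sq_abs, sq, ← mul_inv]
      rw [Finset.sum_congr rfl fun j _ => h0 j, Finset.sum_const, Finset.card_univ]
      simp only [Fintype.card_fin, nsmul_eq_mul, hs2]
      rw [mul_inv_cancel₀ hNpos.ne']
    rw [h1, Real.sqrt_one]
  have he₀n : ‖e₀‖ = 1 := by rw [he₀, EuclideanSpace.norm_single]; norm_num
  set ψ : EuclideanSpace ℝ (Fin (m+1)) ≃ₗᵢ[ℝ] EuclideanSpace ℝ (Fin (m+1)) :=
    Submodule.reflection (ℝ ∙ (e₀ - u))ᗮ with hψ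
  have hψe₀ : ψ e₀ = u := Submodule.reflection_sub (by rw [he₀n, hu_norm])
  have hsum : ∀ v : EuclideanSpace ℝ (Fin (m+1)), ∑ j, ψ v j = s * v 0 := by
    intro v
    have h1 : (inner ℝ (ψ v) (s • u) : ℝ) = ∑ j, ψ v j := by
      rw [PiLp.inner_apply]
      refine Finset.sum_congr rfl fun j _ => ?_
      have h2 : (s • u) j = 1 := by
        show s * s⁻¹ = 1
        exact mul_inv_cancel₀ hs.ne'
      rw [h2]
      simp [RCLike.inner_apply]
    rw [← h1, real_inner_smul_right, ← hψe₀, LinearIsometryEquiv.inner_map_map, he₀,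
      EuclideanSpace.inner_single_right]
    simp
  have hsq : ∀ v : EuclideanSpace ℝ (Fin (m+1)), ∑ j, (ψ v j)^2 = ∑ j, (v j)^2 := by
    intro v
    have h1 : (inner ℝ (ψ v) (ψ v) : ℝ) = inner ℝ v v := by rw [LinearIsometryEquiv.inner_map_map]
    rw [PiLp.inner_apply, PiLp.inner_apply] at h1
    simpa [RCLike.inner_apply, sq] using h1
  set eqv := (MeasurableEquiv.toLp 2 (Fin (m+1) → ℝ)).symm with heqv
  set T : (Fin (m+1) → ℝ) → (Fin (m+1) → ℝ) := fun x => eqv (ψ (eqv.symm x)) with hTdef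
  have hT : MeasurePreserving T volume volume :=
    (EuclideanSpace.volume_preserving_symm_measurableEquiv_toLp (Fin (m+1))).comp
      (ψ.measurePreserving.comp (EuclideanSpace.volume_preserving_symm_measurableEquiv_toLp (Fin (m+1))).symm)
  have hTsum : ∀ x : Fin (m+1) → ℝ, ∑ j, T x j = s * x 0 := fun x =>
    hsum ((WithLp.equiv 2 _).symm x)
  have hTsq : ∀ x : Fin (m+1) → ℝ, ∑ j, (T x j)^2 = ∑ j, (x j)^2 := fun x =>
    hsq ((WithLp.equiv 2 _).symm x)
  have hTshift : ∀ (x : Fin (m+1) → ℝ) (j : Fin (m+1)),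
      T x j - x 0 * s⁻¹ = T (fun k => x k - x 0 * Pi.single (M := fun _ : Fin (m+1) => ℝ) 0 1 k) j := by
    intro x j
    have harg : ((WithLp.equiv 2 _).symm (fun k => x k - x 0 * Pi.single (M := fun _ : Fin (m+1) => ℝ) 0 1 k)
        : EuclideanSpace ℝ (Fin (m+1)))
        = (WithLp.equiv 2 _).symm x - x 0 • e₀ := rfl
    show ψ ((WithLp.equiv 2 _).symm x) j - x 0 * s⁻¹
      = ψ ((WithLp.equiv 2 _).symm (fun k => x k - x 0 * Pi.single (M := fun _ : Fin (m+1) => ℝ) 0 1 k)) j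
    rw [harg, map_sub, _root_.map_smul, hψe₀]
    rfl
  have hrem : ∀ (x : Fin (m+1) → ℝ) (i : Fin m), Fin.removeNth 0 x i = x i.succ := by
    intro x i; rw [Fin.removeNth]; rw [Fin.zero_succAbove]
  have hins_succ : ∀ (t : ℝ) (y : Fin m → ℝ) (i : Fin m),
      Fin.insertNth (α := fun _ => ℝ) 0 t y i.succ = y i := by
    intro t y i
    have h : (0 : Fin (m+1)).succAbove i = i.succ := Fin.zero_succAbove i
    rw [← h, Fin.insertNth_apply_succAbove]
  have hins_zero : ∀ (t : ℝ) (y : Fin m → ℝ), Fin.insertNth (α := fun _ => ℝ) 0 t y 0 = t :=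
    fun t y => Fin.insertNth_apply_same (α := fun _ => ℝ) 0 t y
  have hcen : ∀ x : Fin (m+1) → ℝ,
      gC (T x) = T (Fin.insertNth (α := fun _ => ℝ) 0 0 (Fin.removeNth 0 x)) := by
    intro x
    have h1 : (fun k => x k - x 0 * Pi.single (M := fun _ : Fin (m+1) => ℝ) 0 1 k)
        = Fin.insertNth (α := fun _ => ℝ) 0 0 (Fin.removeNth 0 x) := by
      funext k
      induction k using Fin.cases with
      | zero => rw [hins_zero]; simp
      | succ i =>
          rw [hins_succ, hrem, Pi.single_eq_of_ne (Fin.succ_ne_zero i)]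
          ring
    rw [← h1]
    funext j
    show T x j - (∑ j', T x j') / ((m+1:ℕ):ℝ) = _
    rw [hTsum]
    have h2 : s * x 0 / ((m+1:ℕ):ℝ) = x 0 * s⁻¹ := by
      rw [← hs2]
      field_simp
    rw [h2]
    exact hTshift x j
  set e := MeasurableEquiv.piFinSuccAbove (fun _ : Fin (m+1) => ℝ) 0 with he
  have vp : MeasurePreserving (⇑e) volume volume :=
    volume_preserving_piFinSuccAbove (fun _ : Fin (m+1) => ℝ) 0
  set Cv : (Fin m → ℝ) → (Fin (m+1) → ℝ) :=
    fun y => T (Fin.insertNth (α := fun _ => ℝ) 0 0 y) with hCv_def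
  have hCvm : Measurable Cv :=
    hT.measurable.comp (e.symm.measurable.comp (measurable_const.prodMk measurable_id))
  -- the key factorization lemma
  have key : ∀ (A : Set ℝ) (B : Set (Fin (m+1) → ℝ)), MeasurableSet A → MeasurableSet B →
      ∫⁻ l, (fS ⁻¹' A ∩ gC ⁻¹' B).indicator (fun _ => (1:ENNReal)) l
          * ENNReal.ofReal (gbeDens (m+1) β l)
        = gbeJ1 s A * gbeJ2 m β Cv B := by
    intro A B hA hB
    have hS : MeasurableSet (fS ⁻¹' A ∩ gC ⁻¹' B) := (hfSm hA).inter (hgCm hB)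
    have hF : Measurable fun l => (fS ⁻¹' A ∩ gC ⁻¹' B).indicator (fun _ => (1:ENNReal)) l
        * ENNReal.ofReal (gbeDens (m+1) β l) :=
      (measurable_const.indicator hS).mul hgd.ennreal_ofReal
    set G₁ : ℝ → ENNReal := fun t => A.indicator (fun _ => (1:ENNReal)) (s * t)
      * ENNReal.ofReal (Real.exp (-(t^2)/2)) with hG₁def
    set G₂ : (Fin m → ℝ) → ENNReal := fun y => B.indicator (fun _ => (1:ENNReal)) (Cv y)
      * ENNReal.ofReal (gbeVand (m+1) β (Cv y) * Real.exp (-(∑ i, y i ^ 2)/2)) with hG₂def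
    have hG₁ : Measurable G₁ :=
      ((measurable_const.indicator hA).comp (measurable_id.const_mul s)).mul
        (((measurable_id.pow_const 2).neg.div_const 2).exp.ennreal_ofReal)
    have hG₂ : Measurable G₂ :=
      ((measurable_const.indicator hB).comp hCvm).mul
        (((hVm.comp hCvm).mul
          (((Finset.measurable_sum Finset.univ fun i _ =>
            (measurable_pi_apply i).pow_const 2).neg.div_const 2).exp)).ennreal_ofReal)
    have hpoint : ∀ x : Fin (m+1) → ℝ,
        (fS ⁻¹' A ∩ gC ⁻¹' B).indicator (fun _ => (1:ENNReal)) (T x)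
            * ENNReal.ofReal (gbeDens (m+1) β (T x))
          = G₁ (x 0) * G₂ (Fin.removeNth 0 x) := by
      intro x
      have hsum' : fS (T x) = s * x 0 := hTsum x
      have hcent' : gC (T x) = Cv (Fin.removeNth 0 x) := hcen x
      have hVeq : gbeVand (m+1) β (T x) = gbeVand (m+1) β (Cv (Fin.removeNth 0 x)) := by
        rw [← hcent']
        exact (hVshift (T x) ((∑ j', T x j') / ((m+1:ℕ):ℝ))).symm
      have hEeq : Real.exp (-(∑ j, (T x j) ^ 2)/2)
          = Real.exp (-(x 0 ^2)/2) * Real.exp (-(∑ i, (Fin.removeNth 0 x i) ^ 2)/2) := by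
        rw [hTsq, ← Real.exp_add]
        congr 1
        have h5 : ∑ i : Fin m, (Fin.removeNth 0 x i)^2 = ∑ i : Fin m, (x i.succ)^2 :=
          Finset.sum_congr rfl fun i _ => by rw [hrem]
        rw [h5, Fin.sum_univ_succ (f := fun j => x j ^ 2)]
        ring
      have hind : (fS ⁻¹' A ∩ gC ⁻¹' B).indicator (fun _ => (1:ENNReal)) (T x)
          = A.indicator (fun _ => (1:ENNReal)) (fS (T x))
            * B.indicator (fun _ => (1:ENNReal)) (gC (T x)) := by
        by_cases h1 : fS (T x) ∈ A <;> by_cases h2 : gC (T x) ∈ B <;>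
          simp [Set.indicator_apply, Set.mem_inter_iff, Set.mem_preimage, h1, h2]
      have hof : ENNReal.ofReal (gbeDens (m+1) β (T x))
          = ENNReal.ofReal (Real.exp (-(x 0 ^2)/2))
            * ENNReal.ofReal (gbeVand (m+1) β (Cv (Fin.removeNth 0 x))
              * Real.exp (-(∑ i, (Fin.removeNth 0 x i) ^2)/2)) := by
        show ENNReal.ofReal (gbeVand (m+1) β (T x) * Real.exp (-(∑ j, (T x j) ^2)/2)) = _
        rw [hVeq, hEeq, ← ENNReal.ofReal_mul (Real.exp_nonneg _)]
        congr 1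
        ring
      rw [hind, hsum', hcent', hof, hG₁def, hG₂def]
      ring
    calc ∫⁻ l, (fS ⁻¹' A ∩ gC ⁻¹' B).indicator (fun _ => (1:ENNReal)) l
            * ENNReal.ofReal (gbeDens (m+1) β l)
        = ∫⁻ x, (fS ⁻¹' A ∩ gC ⁻¹' B).indicator (fun _ => (1:ENNReal)) (T x)
            * ENNReal.ofReal (gbeDens (m+1) β (T x)) := (hT.lintegral_comp hF).symm
      _ = ∫⁻ x, G₁ (x 0) * G₂ (Fin.removeNth 0 x) := lintegral_congr hpoint
      _ = ∫⁻ z : ℝ × (Fin m → ℝ), G₁ z.1 * G₂ z.2 :=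
          vp.lintegral_comp ((hG₁.comp measurable_fst).mul (hG₂.comp measurable_snd))
      _ = (∫⁻ t, G₁ t) * ∫⁻ y, G₂ y := by
          rw [Measure.volume_eq_prod]
          exact lintegral_prod_mul hG₁.aemeasurable hG₂.aemeasurable
      _ = gbeJ1 s A * gbeJ2 m β Cv B := rfl
  -- expressing μ via the density
  have hzinv : (0:ℝ) ≤ Z⁻¹ := inv_nonneg.mpr (by rw [hZ']; exact integral_nonneg hnn)
  have hμS : ∀ S : Set (Fin (m+1) → ℝ), MeasurableSet S →
      μ S = ENNReal.ofReal Z⁻¹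
        * ∫⁻ l, S.indicator (fun _ => (1:ENNReal)) l * ENNReal.ofReal (gbeDens (m+1) β l) := by
    intro S hS
    calc μ S = ∫⁻ l in S, ENNReal.ofReal (Z⁻¹ * gbeDens (m+1) β l) ∂volume := by
          rw [hμ']; exact withDensity_apply _ hS
      _ = ∫⁻ l, S.indicator (fun l => ENNReal.ofReal (Z⁻¹ * gbeDens (m+1) β l)) l :=
          (lintegral_indicator hS _).symm
      _ = ∫⁻ l, ENNReal.ofReal Z⁻¹
            * (S.indicator (fun _ => (1:ENNReal)) l * ENNReal.ofReal (gbeDens (m+1) β l)) :=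
          lintegral_congr fun l => by
            by_cases h : l ∈ S <;>
              simp [Set.indicator_of_mem, Set.indicator_of_notMem, h,
                ENNReal.ofReal_mul hzinv]
      _ = ENNReal.ofReal Z⁻¹
            * ∫⁻ l, S.indicator (fun _ => (1:ENNReal)) l * ENNReal.ofReal (gbeDens (m+1) β l) :=
          lintegral_const_mul' _ _ ENNReal.ofReal_ne_top
  -- positivity of the normalization
  have hZpos : 0 < Z := by
    rw [hZ']
    rw [integral_pos_iff_support_of_nonneg (fun l => hnn l) hint]
    have hnull : volume {l : Fin (m+1) → ℝ | gbeDens (m+1) β l = 0} = 0 := by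
      have hsub : {l : Fin (m+1) → ℝ | gbeDens (m+1) β l = 0} ⊆
          ⋃ p : {p : Fin (m+1) × Fin (m+1) // p.1 ≠ p.2},
            {l : Fin (m+1) → ℝ | l p.1.2 - l p.1.1 = 0} := by
        intro l hl
        simp only [Set.mem_setOf_eq] at hl
        have hV : gbeVand (m+1) β l = 0 := by
          rcases mul_eq_zero.mp hl with h | h
          · exact h
          · exact absurd h (Real.exp_ne_zero _)
        have hProd : (∏ p ∈ Finset.univ.filter (fun p : Fin (m+1) × Fin (m+1) => p.1 < p.2),
            (l p.2 - l p.1)) = 0 := by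
          by_contra hne
          exact (Real.rpow_pos_of_pos (abs_pos.mpr hne) β).ne' hV
        obtain ⟨p, hp, hpe⟩ := Finset.prod_eq_zero_iff.mp hProd
        have hplt : p.1 ≠ p.2 := ne_of_lt (Finset.mem_filter.mp hp).2
        exact Set.mem_iUnion.mpr ⟨⟨p, hplt⟩, hpe⟩
      refine measure_mono_null hsub ?_
      rw [measure_iUnion_null_iff]
      intro p
      exact gbe_aux_hyperplane_null _ p.1.1 p.1.2 p.2
    have huniv : (volume : Measure (Fin (m+1) → ℝ)) Set.univ
        ≤ volume (Function.support (gbeDens (m+1) β))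
          + volume {l : Fin (m+1) → ℝ | gbeDens (m+1) β l = 0} := by
      refine le_trans (measure_mono ?_) (measure_union_le _ _)
      intro l _
      by_cases h : gbeDens (m+1) β l = 0
      · exact Or.inr h
      · exact Or.inl h
    rw [hnull, add_zero] at huniv
    exact lt_of_lt_of_le (isOpen_univ.measure_pos volume Set.univ_nonempty) huniv
  have hL : ENNReal.ofReal Z = ∫⁻ l, ENNReal.ofReal (gbeDens (m+1) β l) := by
    rw [hZ']
    exact ofReal_integral_eq_lintegral_ofReal hint (Filter.Eventually.of_forall hnn)
  have hLJ : (∫⁻ l, ENNReal.ofReal (gbeDens (m+1) β l)) = gbeJ1 s Set.univ * gbeJ2 m β Cv Set.univ := by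
    have h := key Set.univ Set.univ MeasurableSet.univ MeasurableSet.univ
    simpa using h
  have hone : ENNReal.ofReal Z⁻¹ * (gbeJ1 s Set.univ * gbeJ2 m β Cv Set.univ) = 1 := by
    rw [← hLJ, ← hL, ← ENNReal.ofReal_mul hzinv, inv_mul_cancel₀ hZpos.ne', ENNReal.ofReal_one]
  -- conclusion
  intro A B hA hB
  have h2 := key A Set.univ hA MeasurableSet.univ
  have h3 := key Set.univ B MeasurableSet.univ hB
  simp only [Set.preimage_univ, Set.inter_univ, Set.univ_inter] at h2 h3
  rw [hμS _ ((hfSm hA).inter (hgCm hB)), hμS _ (hfSm hA), hμS _ (hgCm hB),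
    key A B hA hB, h2, h3]
  calc ENNReal.ofReal Z⁻¹ * (gbeJ1 s A * gbeJ2 m β Cv B)
      = (ENNReal.ofReal Z⁻¹ * (gbeJ1 s A * gbeJ2 m β Cv B))
        * (ENNReal.ofReal Z⁻¹ * (gbeJ1 s Set.univ * gbeJ2 m β Cv Set.univ)) := by
        rw [hone, mul_one]
    _ = ENNReal.ofReal Z⁻¹ * (gbeJ1 s A * gbeJ2 m β Cv Set.univ)
        * (ENNReal.ofReal Z⁻¹ * (gbeJ1 s Set.univ * gbeJ2 m β Cv B)) := by
        ring
end

section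
/- Define c(ν, β, n) for finite sequences ν of positive integers with |ν| := Σ_k ν_k even by the Schwinger-Dyson recursion: c(ν) = (β/2)Σ_{i=1}^{ν_m - 1} c((ν_r)_{r≠m}, i-1, ν_m-1-i) + (1-β/2)(ν_m-1)c((ν_r)_{r≠m}, ν_m-2) + Σ_{k=1}^{m-1} ν_k c((ν_r)_{r≠k,m}, ν_k+ν_m-2), with conventions c((0)) = n, c(∅) = 1 (where m = length of ν). Then at β = -2/n, c(ν, -2/n, n) = n^{m(ν) - |ν|/2} · |ν|!/(2^{|ν|/2}(|ν|/2)!). -/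
lemma sum_eraseIdx_aux : ∀ (l : List ℕ) (k : ℕ), k < l.length →
    (l.eraseIdx k).sum + l.getD k 0 = l.sum := by
  intro l
  induction l with
  | nil => intro k h; simp at h
  | cons a l ih =>
    intro k h
    cases k with
    | zero => simp [List.eraseIdx]; omega
    | succ k =>
      simp only [List.eraseIdx, List.sum_cons, List.getD_cons_succ]
      have := ih k (by simpa using Nat.lt_of_succ_lt_succ h)
      omega

lemma sum_getD_aux : ∀ l : List ℕ, ∑ k ∈ Finset.range l.length, l.getD k 0 = l.sum := by
  intro l
  induction l with
  | nil => simp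
  | cons a l ih =>
    rw [List.length_cons, Finset.sum_range_succ', List.sum_cons]
    simp only [List.getD_cons_succ, List.getD_cons_zero]
    rw [ih]
    omega

noncomputable def dd (t : ℕ) : ℝ := (Nat.factorial (2*t)) / (2^t * Nat.factorial t)

lemma dd_zero : dd 0 = 1 := by simp [dd, Nat.factorial]

lemma dd_succ (t : ℕ) : dd (t+1) = (2*t+1) * dd t := by
  unfold dd
  have h1 : 2*(t+1) = (2*t+1)+1 := by ring
  rw [h1, Nat.factorial_succ, Nat.factorial_succ, Nat.factorial_succ]
  have h2 : (Nat.factorial t : ℝ) ≠ 0 := by positivity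
  have h3 : (2:ℝ)^t ≠ 0 := by positivity
  push_cast
  field_simp
  ring

lemma sd_key
    (n : ℕ) (hn : 2 ≤ n) (β : ℝ) (hβ : β = -2 / n)
    (c : List ℕ → ℝ)
    (hempty : c [] = 1)
    (hzero : ∀ l₁ l₂ : List ℕ, c (l₁ ++ 0 :: l₂) = n * c (l₁ ++ l₂))
    (hrec : ∀ (l : List ℕ) (q : ℕ), 1 ≤ q → Even (l.sum + q) →
      c (l ++ [q]) =
        β / 2 * ∑ i ∈ Finset.Icc 1 (q - 1), c (l ++ [i - 1, q - 1 - i])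
        + (1 - β / 2) * ((q : ℝ) - 1) * c (l ++ [q - 2])
        + ∑ k ∈ Finset.range l.length,
            (l.getD k 0 : ℝ) * c (l.eraseIdx k ++ [l.getD k 0 + q - 2])) :
    ∀ N : ℕ, ∀ ν : List ℕ, ν.sum + ν.length ≤ N → Even ν.sum →
      c ν * (n:ℝ) ^ (ν.sum / 2) = (n:ℝ) ^ ν.length * dd (ν.sum / 2) := by
  have hNpos : (0:ℝ) < n := by positivity
  have hNne : (n:ℝ) ≠ 0 := ne_of_gt hNpos
  intro N
  induction N with
  | zero =>
    intro ν h _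
    have hν : ν = [] := by
      cases ν with
      | nil => rfl
      | cons a l => simp at h
    subst hν
    simp [hempty, dd_zero]
  | succ N ih =>
    intro ν hle heven
    rcases List.eq_nil_or_concat ν with rfl | ⟨l, q, rfl⟩
    · simp [hempty, dd_zero]
    rw [List.concat_eq_append] at hle heven ⊢
    have hsum : (l ++ [q]).sum = l.sum + q := by simp
    have hlen : (l ++ [q]).length = l.length + 1 := by simp
    have hle' : l.sum + q + (l.length + 1) ≤ N + 1 := by rwa [hsum, hlen] at hle
    have heven' : Even (l.sum + q) := by rwa [hsum] at heven
    rw [hsum, hlen]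
    rcases Nat.eq_zero_or_pos q with hq0 | hq1
    · -- q = 0 : zero convention
      subst hq0
      have hz : c (l ++ [0]) = n * c l := by
        have := hzero l []
        simpa using this
      have hevenl : Even l.sum := by simpa using heven'
      have hl := ih l (by omega) hevenl
      rw [hz, Nat.add_zero, mul_assoc, hl, pow_succ]
      ring
    · -- q ≥ 1 : recursion
      obtain ⟨t', ht⟩ : ∃ t', (l.sum + q) / 2 = t' + 1 := by
        refine ⟨(l.sum + q)/2 - 1, ?_⟩
        obtain ⟨r, hr2⟩ := heven'
        omega
      have hst : l.sum + q = 2*t' + 2 := by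
        obtain ⟨r, hr2⟩ := heven'
        omega
      have hr := hrec l q hq1 heven'
      -- evaluate recursively each term
      have hA : ∀ i ∈ Finset.Icc 1 (q-1), c (l ++ [i-1, q-1-i])
          = (n:ℝ)^(l.length+2) * dd t' / (n:ℝ)^t' := by
        intro i hi
        simp only [Finset.mem_Icc] at hi
        have hsum2 : (l ++ [i-1, q-1-i]).sum = 2*t' := by
          simp only [List.sum_append, List.sum_cons, List.sum_nil]
          omega
        have hlen2 : (l ++ [i-1, q-1-i]).length = l.length + 2 := by simp
        have h2 := ih (l ++ [i-1, q-1-i]) (by rw [hsum2, hlen2]; omega)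
          (by rw [hsum2]; exact even_two_mul t')
        rw [hsum2, hlen2, Nat.mul_div_cancel_left _ (by norm_num)] at h2
        rw [eq_div_iff (by positivity)]
        exact h2
      have hB : (1 - β/2) * ((q:ℝ) - 1) * c (l ++ [q-2])
          = (1 - β/2) * ((q:ℝ) - 1) * ((n:ℝ)^(l.length+1) * dd t' / (n:ℝ)^t') := by
        rcases eq_or_lt_of_le (Nat.succ_le_of_lt hq1) with hq1' | hq2
        · rw [← hq1']
          norm_num
        · have hq2' : 2 ≤ q := hq2
          have hsum2 : (l ++ [q-2]).sum = 2*t' := by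
            simp only [List.sum_append, List.sum_cons, List.sum_nil]
            omega
          have hlen2 : (l ++ [q-2]).length = l.length + 1 := by simp
          have h2 := ih (l ++ [q-2]) (by rw [hsum2, hlen2]; omega)
            (by rw [hsum2]; exact even_two_mul t')
          rw [hsum2, hlen2, Nat.mul_div_cancel_left _ (by norm_num)] at h2
          have hx : c (l ++ [q-2]) = (n:ℝ)^(l.length+1) * dd t' / (n:ℝ)^t' := by
            rw [eq_div_iff (by positivity)]
            exact h2
          rw [hx]
      have hC : ∀ k ∈ Finset.range l.length,
          (l.getD k 0 : ℝ) * c (l.eraseIdx k ++ [l.getD k 0 + q - 2])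
          = (l.getD k 0 : ℝ) * ((n:ℝ)^l.length * dd t' / (n:ℝ)^t') := by
        intro k hk
        rw [Finset.mem_range] at hk
        rcases Nat.eq_zero_or_pos (l.getD k 0) with ha0 | hapos
        · rw [ha0]; norm_num
        · have herase := sum_eraseIdx_aux l k hk
          have hsum2 : (l.eraseIdx k ++ [l.getD k 0 + q - 2]).sum = 2*t' := by
            simp only [List.sum_append, List.sum_cons, List.sum_nil]
            omega
          have hlen2 : (l.eraseIdx k ++ [l.getD k 0 + q - 2]).length = l.length := by
            simp only [List.length_append, List.length_cons, List.length_nil,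
              List.length_eraseIdx]
            rw [if_pos hk]
            omega
          have h2 := ih _ (by rw [hsum2, hlen2]; omega)
            (by rw [hsum2]; exact even_two_mul t')
          rw [hsum2, hlen2, Nat.mul_div_cancel_left _ (by norm_num)] at h2
          have hx : c (l.eraseIdx k ++ [l.getD k 0 + q - 2])
              = (n:ℝ)^l.length * dd t' / (n:ℝ)^t' := by
            rw [eq_div_iff (by positivity)]
            exact h2
          rw [hx]
      rw [Finset.sum_congr rfl hA, Finset.sum_const, Nat.card_Icc, hB] at hr
      rw [Finset.sum_congr rfl hC, ← Finset.sum_mul] at hr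
      have hsumcast : ∑ k ∈ Finset.range l.length, (l.getD k 0 : ℝ) = (l.sum : ℝ) := by
        rw [← Nat.cast_sum, sum_getD_aux]
      rw [hsumcast] at hr
      have hq' : ((q - 1 + 1 - 1 : ℕ) : ℝ) = (q:ℝ) - 1 := by
        have h : q - 1 + 1 - 1 = q - 1 := by omega
        rw [h, Nat.cast_sub hq1]
        norm_num
      rw [nsmul_eq_mul, hq'] at hr
      have hscast : (l.sum : ℝ) = 2*(t':ℝ) + 2 - q := by
        have h0 : ((l.sum : ℝ)) + q = 2*(t':ℝ) + 2 := by exact_mod_cast congrArg (Nat.cast : ℕ → ℝ) hst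
        linarith
      rw [hscast] at hr
      rw [ht, dd_succ, hr, hβ]
      field_simp
      ring

/-- The solutions `c(ν, β, n)` of the Schwinger-Dyson recursion, at `β = -2/n`, are given by
`c(ν) = n^{m(ν) - |ν|/2} |ν|! / (2^{|ν|/2} (|ν|/2)!)`. -/
theorem schwinger_dyson_solution_at_beta_neg_two_over_n
    (n : ℕ) (hn : 2 ≤ n) (β : ℝ) (hβ : β = -2 / n)
    (c : List ℕ → ℝ)
    (hempty : c [] = 1)
    (hzero : ∀ l₁ l₂ : List ℕ, c (l₁ ++ 0 :: l₂) = n * c (l₁ ++ l₂))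
    (hrec : ∀ (l : List ℕ) (q : ℕ), 1 ≤ q → Even (l.sum + q) →
      c (l ++ [q]) =
        β / 2 * ∑ i ∈ Finset.Icc 1 (q - 1), c (l ++ [i - 1, q - 1 - i])
        + (1 - β / 2) * ((q : ℝ) - 1) * c (l ++ [q - 2])
        + ∑ k ∈ Finset.range l.length,
            (l.getD k 0 : ℝ) * c (l.eraseIdx k ++ [l.getD k 0 + q - 2])) :
    ∀ ν : List ℕ, (∀ k ∈ ν, 0 < k) → Even ν.sum →
      c ν = (n : ℝ) ^ ((ν.length : ℤ) - (ν.sum / 2 : ℕ)) *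
        (Nat.factorial ν.sum) / (2 ^ (ν.sum / 2) * Nat.factorial (ν.sum / 2)) := by
  intro ν _ heven
  have hNpos : (0:ℝ) < n := by positivity
  have hNne : (n:ℝ) ≠ 0 := ne_of_gt hNpos
  have h2t : 2 * (ν.sum / 2) = ν.sum := by
    obtain ⟨r, hr⟩ := heven
    omega
  have key := sd_key n hn β hβ c hempty hzero hrec (ν.sum + ν.length) ν le_rfl heven
  have hc : c ν = (n:ℝ)^ν.length * dd (ν.sum / 2) / (n:ℝ)^(ν.sum / 2) := by
    rw [eq_div_iff (by positivity)]
    exact key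
  rw [hc, dd, h2t, zpow_sub₀ hNne, zpow_natCast, zpow_natCast]
  have h2ne : (2:ℝ)^(ν.sum/2) * (Nat.factorial (ν.sum/2) : ℝ) ≠ 0 := by positivity
  field_simp
end
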